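/- Let R be a Markov probability measure on path space and P ≪ R. Suppose that for some fixed t ∈ [0,1] the Radon–Nikodym derivative factorizes as dP/dR = α_t · β_t R-a.s., where α_t ≥ 0 is 𝒜_{[0,t]}-measurable and β_t ≥ 0 is 𝒜_{[t,1]}-measurable. Then for all events A ∈ 𝒜_{[0,t]} and B ∈ 𝒜_{[t,1]}, P(A ∩ B | X_t) = P(A | X_t) P(B | X_t) P-a.s.; i.e., P satisfies the Markov splitting at time t. -/

import Mathlib

open MeasureTheory

noncomputable section

variable {Ω 𝒳 : Type*}

/-- σ-algebra generated by the canonical process on the time window `[s,u]`. -/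
def window [MeasurableSpace 𝒳] (X : ℝ → Ω → 𝒳) (s u : ℝ) : MeasurableSpace Ω :=
  ⨆ r ∈ Set.Icc s u, MeasurableSpace.comap (X r) inferInstance

/-- σ-algebra generated by the position at time `t`. -/
def at1 [MeasurableSpace 𝒳] (X : ℝ → Ω → 𝒳) (t : ℝ) : MeasurableSpace Ω :=
  MeasurableSpace.comap (X t) inferInstance

/-- σ-algebra generated by the pair of positions at times `s` and `u`. -/
def at2 [MeasurableSpace 𝒳] (X : ℝ → Ω → 𝒳) (s u : ℝ) : MeasurableSpace Ω :=
  MeasurableSpace.comap (fun ω => (X s ω, X u ω)) inferInstance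

/-- Indicator function of an event, real-valued. -/
def ind (A : Set Ω) : Ω → ℝ := A.indicator (fun _ => 1)

/-- The two-sided (symmetric) Markov property: for every time `t ∈ [0,1]`, past and future
events are conditionally independent given the present position `X t`. -/
def IsMarkov [MeasurableSpace Ω] [MeasurableSpace 𝒳]
    (X : ℝ → Ω → 𝒳) (P : Measure Ω) : Prop :=
  ∀ t ∈ Set.Icc (0:ℝ) 1, ∀ A B : Set Ω,
    MeasurableSet[window X 0 t] A → MeasurableSet[window X t 1] B →
    P[ind (A ∩ B) | at1 X t] =ᵐ[P] P[ind A | at1 X t] * P[ind B | at1 X t]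

/-- The reciprocal property: for all `0 ≤ s ≤ u ≤ 1`, the events inside `[s,u]` and those
outside are conditionally independent given the pair `(X s, X u)`. -/
def IsReciprocal [MeasurableSpace Ω] [MeasurableSpace 𝒳]
    (X : ℝ → Ω → 𝒳) (P : Measure Ω) : Prop :=
  ∀ s u : ℝ, 0 ≤ s → s ≤ u → u ≤ 1 → ∀ A B C : Set Ω,
    MeasurableSet[window X 0 s] A → MeasurableSet[window X s u] B →
    MeasurableSet[window X u 1] C →
    P[ind (A ∩ B ∩ C) | at2 X s u] =ᵐ[P]
      P[ind (A ∩ C) | at2 X s u] * P[ind B | at2 X s u]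

open Filter Topology
open scoped ENNReal NNReal

section IndLemmas

lemma ind_nonneg {A : Set Ω} (ω : Ω) : 0 ≤ ind A ω := by
  unfold ind Set.indicator; split <;> norm_num

lemma ind_le_one {A : Set Ω} (ω : Ω) : ind A ω ≤ 1 := by
  unfold ind Set.indicator; split <;> norm_num

lemma norm_ind_le_one {A : Set Ω} (ω : Ω) : ‖ind A ω‖ ≤ 1 := by
  rw [Real.norm_eq_abs, abs_of_nonneg (ind_nonneg ω)]; exact ind_le_one ω

lemma ind_inter {A B : Set Ω} (ω : Ω) : ind (A ∩ B) ω = ind A ω * ind B ω := by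
  unfold ind Set.indicator
  by_cases hA : ω ∈ A <;> by_cases hB : ω ∈ B <;>
    simp [hA, hB, Set.mem_inter_iff]

lemma stronglyMeasurable_ind {m : MeasurableSpace Ω} {A : Set Ω}
    (hA : MeasurableSet[m] A) : StronglyMeasurable[m] (ind A) :=
  stronglyMeasurable_const.indicator hA

lemma integrable_ind {m0 : MeasurableSpace Ω} {μ : Measure Ω} [IsFiniteMeasure μ]
    {A : Set Ω} (hA : MeasurableSet A) : Integrable (ind A) μ :=
  (integrable_const (1:ℝ)).indicator hA

lemma norm_le_of_nonneg_of_le {x c : ℝ} (h0 : 0 ≤ x) (h1 : x ≤ c) : ‖x‖ ≤ c := by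
  rw [Real.norm_eq_abs, abs_of_nonneg h0]; exact h1

end IndLemmas

section Basic

variable {m m0 : MeasurableSpace Ω} {μ : Measure Ω}

lemma sigmaFinite_trim_of_le (hm : m ≤ m0) [IsFiniteMeasure μ] : SigmaFinite (μ.trim hm) := by
  haveI := isFiniteMeasure_trim (μ := μ) hm
  infer_instance

lemma integrable_of_bounded [IsFiniteMeasure μ] {f : Ω → ℝ}
    (hf : AEStronglyMeasurable f μ) (c : ℝ) (hb : ∀ ω, ‖f ω‖ ≤ c) : Integrable f μ :=
  Integrable.mono' (integrable_const c) hf (Filter.Eventually.of_forall hb)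

lemma setIntegral_eq_integral_ind {S : Set Ω} (hS : MeasurableSet S) (g : Ω → ℝ) :
    ∫ ω in S, g ω ∂μ = ∫ ω, ind S ω * g ω ∂μ := by
  rw [← integral_indicator hS]
  congr 1
  funext ω
  by_cases h : ω ∈ S <;> simp [ind, Set.indicator, h]

lemma integral_stronglyMeasurable_mul_condexp (hm : m ≤ m0) [SigmaFinite (μ.trim hm)]
    {ψ g : Ω → ℝ} (hψ : StronglyMeasurable[m] ψ) (hg : Integrable g μ)
    (hψg : Integrable (fun ω => ψ ω * g ω) μ) :
    ∫ ω, ψ ω * g ω ∂μ = ∫ ω, ψ ω * (μ[g|m]) ω ∂μ := by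
  have h1 : Integrable (ψ * g) μ := hψg
  have h2 := condExp_mul_of_stronglyMeasurable_left hψ h1 hg
  rw [show ∫ ω, ψ ω * g ω ∂μ = ∫ ω, (ψ * g) ω ∂μ from rfl,
    ← integral_condExp hm (f := ψ * g)]
  exact integral_congr_ae h2

lemma condexp_ind_mem (hm : m ≤ m0) [IsFiniteMeasure μ] {A : Set Ω}
    (hA : MeasurableSet A) :
    ∀ᵐ ω ∂μ, 0 ≤ (μ[ind A|m]) ω ∧ (μ[ind A|m]) ω ≤ 1 := by
  have h1 : 0 ≤ᵐ[μ] μ[ind A|m] :=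
    condExp_nonneg (Filter.Eventually.of_forall fun ω => ind_nonneg ω)
  have h2 : μ[ind A|m] ≤ᵐ[μ] μ[(fun _ => (1:ℝ))|m] :=
    condExp_mono (integrable_ind hA) (integrable_const 1)
      (Filter.Eventually.of_forall fun ω => ind_le_one ω)
  rw [condExp_const hm (1:ℝ)] at h2
  filter_upwards [h1, h2] with ω hω1 hω2
  exact ⟨hω1, hω2⟩

lemma integral_mul_condexp_ind (hm : m ≤ m0) [IsFiniteMeasure μ] {f : Ω → ℝ} {B : Set Ω}
    (hf : Integrable f μ) (hB : MeasurableSet B) :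
    ∫ ω, f ω * (μ[ind B|m]) ω ∂μ = ∫ ω, (μ[f|m]) ω * (μ[ind B|m]) ω ∂μ := by
  haveI := sigmaFinite_trim_of_le (μ := μ) hm
  have hbd : ∀ᵐ ω ∂μ, ‖(μ[ind B|m]) ω‖ ≤ 1 := by
    filter_upwards [condexp_ind_mem hm hB] with ω hω
    rw [Real.norm_eq_abs, abs_of_nonneg hω.1]; exact hω.2
  have hint : Integrable (fun ω => (μ[ind B|m]) ω * f ω) μ :=
    Integrable.bdd_mul hf (stronglyMeasurable_condExp.mono hm).aestronglyMeasurable hbd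
  have hint' : Integrable ((μ[ind B|m]) * f) μ := hint
  have hpull := condExp_mul_of_stronglyMeasurable_left stronglyMeasurable_condExp hint' hf
  have e1 : (fun ω => f ω * (μ[ind B|m]) ω) = fun ω => ((μ[ind B|m]) * f) ω := by
    funext ω; exact mul_comm _ _
  rw [e1, ← integral_condExp hm (f := (μ[ind B|m]) * f)]
  rw [integral_congr_ae hpull]
  congr 1
  funext ω
  exact mul_comm _ _

end Basic
section MarkovAux

variable {m mF mG m0 : MeasurableSpace Ω} {μ : Measure Ω}

/-- Claim A: if the splitting holds for indicators, the condexp of a future indicator on the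
past σ-algebra is already `m`-measurable. -/
lemma condexp_ind_window_eq (hmF : m ≤ mF) (hmG : m ≤ mG) (hF : mF ≤ m0) (hG : mG ≤ m0)
    [IsFiniteMeasure μ]
    (hMark : ∀ A B : Set Ω, MeasurableSet[mF] A → MeasurableSet[mG] B →
      μ[ind (A ∩ B)|m] =ᵐ[μ] μ[ind A|m] * μ[ind B|m])
    {B : Set Ω} (hB : MeasurableSet[mG] B) :
    μ[ind B|mF] =ᵐ[μ] μ[ind B|m] := by
  have hm0 : m ≤ m0 := hmF.trans hF
  haveI := sigmaFinite_trim_of_le (μ := μ) hm0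
  haveI := sigmaFinite_trim_of_le (μ := μ) hF
  refine (ae_eq_condExp_of_forall_setIntegral_eq hF (integrable_ind (hG _ hB))
    (fun s _ _ => integrable_condExp.integrableOn) (fun A hA _ => ?_)
    (stronglyMeasurable_condExp.mono hmF).aestronglyMeasurable).symm
  have hAm : MeasurableSet A := hF _ hA
  rw [setIntegral_eq_integral_ind hAm, setIntegral_eq_integral_ind hAm]
  rw [integral_mul_condexp_ind hm0 (integrable_ind hAm) (hG _ hB)]
  have h2 := hMark A B hA hB
  calc ∫ ω, (μ[ind A|m]) ω * (μ[ind B|m]) ω ∂μ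
      = ∫ ω, (μ[ind A|m] * μ[ind B|m]) ω ∂μ := rfl
    _ = ∫ ω, (μ[ind (A ∩ B)|m]) ω ∂μ := (integral_congr_ae h2).symm
    _ = ∫ ω, ind (A ∩ B) ω ∂μ := integral_condExp hm0
    _ = ∫ ω, ind A ω * ind B ω ∂μ := by congr 1; funext ω; exact ind_inter ω

/-- Claim B: the condexp of a past-measurable integrable function on the future σ-algebra
equals its condexp on `m`. -/
lemma condexp_window_eq (hmF : m ≤ mF) (hmG : m ≤ mG) (hF : mF ≤ m0) (hG : mG ≤ m0)
    [IsFiniteMeasure μ]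
    (hMark : ∀ A B : Set Ω, MeasurableSet[mF] A → MeasurableSet[mG] B →
      μ[ind (A ∩ B)|m] =ᵐ[μ] μ[ind A|m] * μ[ind B|m])
    {f : Ω → ℝ} (hfm : StronglyMeasurable[mF] f) (hf : Integrable f μ) :
    μ[f|mG] =ᵐ[μ] μ[f|m] := by
  have hm0 : m ≤ m0 := hmF.trans hF
  haveI := sigmaFinite_trim_of_le (μ := μ) hm0
  haveI := sigmaFinite_trim_of_le (μ := μ) hF
  haveI := sigmaFinite_trim_of_le (μ := μ) hG
  refine (ae_eq_condExp_of_forall_setIntegral_eq hG hf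
    (fun s _ _ => integrable_condExp.integrableOn) (fun B' hB' _ => ?_)
    (stronglyMeasurable_condExp.mono hmG).aestronglyMeasurable).symm
  have hBm : MeasurableSet B' := hG _ hB'
  rw [setIntegral_eq_integral_ind hBm, setIntegral_eq_integral_ind hBm]
  have hci : Integrable (fun ω => (μ[f|m]) ω * ind B' ω) μ := by
    refine (Integrable.bdd_mul (c := 1) (integrable_condExp (f := f) (m := m))
      (stronglyMeasurable_ind hBm).aestronglyMeasurable
      (Filter.Eventually.of_forall fun ω => norm_ind_le_one ω)).congr ?_
    exact Filter.Eventually.of_forall fun ω => mul_comm _ _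
  have hfi : Integrable (fun ω => f ω * ind B' ω) μ := by
    refine (Integrable.bdd_mul (c := 1) hf
      (stronglyMeasurable_ind hBm).aestronglyMeasurable
      (Filter.Eventually.of_forall fun ω => norm_ind_le_one ω)).congr ?_
    exact Filter.Eventually.of_forall fun ω => mul_comm _ _
  calc ∫ ω, ind B' ω * (μ[f|m]) ω ∂μ
      = ∫ ω, (μ[f|m]) ω * ind B' ω ∂μ := by congr 1; funext ω; exact mul_comm _ _
    _ = ∫ ω, (μ[f|m]) ω * (μ[ind B'|m]) ω ∂μ :=
        integral_stronglyMeasurable_mul_condexp hm0 stronglyMeasurable_condExp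
          (integrable_ind hBm) hci
    _ = ∫ ω, f ω * (μ[ind B'|m]) ω ∂μ := (integral_mul_condexp_ind hm0 hf hBm).symm
    _ = ∫ ω, f ω * (μ[ind B'|mF]) ω ∂μ := by
        refine integral_congr_ae ?_
        filter_upwards [condexp_ind_window_eq hmF hmG hF hG hMark hB'] with ω hω
        rw [hω]
    _ = ∫ ω, f ω * ind B' ω ∂μ :=
        (integral_stronglyMeasurable_mul_condexp hF hfm (integrable_ind hBm) hfi).symm
    _ = ∫ ω, ind B' ω * f ω ∂μ := by congr 1; funext ω; exact mul_comm _ _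

/-- Step 2: factorization of the conditional expectation of a product of a bounded
past-measurable and a bounded future-measurable function. -/
lemma condexp_mul_of_meas (hmF : m ≤ mF) (hmG : m ≤ mG) (hF : mF ≤ m0) (hG : mG ≤ m0)
    [IsFiniteMeasure μ]
    (hMark : ∀ A B : Set Ω, MeasurableSet[mF] A → MeasurableSet[mG] B →
      μ[ind (A ∩ B)|m] =ᵐ[μ] μ[ind A|m] * μ[ind B|m])
    {f g : Ω → ℝ} (hfm : StronglyMeasurable[mF] f) (hgm : StronglyMeasurable[mG] g)
    {cf cg : ℝ} (hfb : ∀ ω, ‖f ω‖ ≤ cf) (hgb : ∀ ω, ‖g ω‖ ≤ cg) :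
    μ[fun ω => f ω * g ω|m] =ᵐ[μ] μ[f|m] * μ[g|m] := by
  have hm0 : m ≤ m0 := hmF.trans hF
  haveI := sigmaFinite_trim_of_le (μ := μ) hm0
  haveI := sigmaFinite_trim_of_le (μ := μ) hG
  have hf_int : Integrable f μ :=
    integrable_of_bounded (hfm.mono hF).aestronglyMeasurable cf hfb
  have hg_int : Integrable g μ :=
    integrable_of_bounded (hgm.mono hG).aestronglyMeasurable cg hgb
  have hgf_int : Integrable (g * f) μ := by
    refine Integrable.bdd_mul (c := cg) hf_int (hgm.mono hG).aestronglyMeasurable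
      (Filter.Eventually.of_forall hgb)
  have h2a : μ[fun ω => f ω * g ω|mG] =ᵐ[μ] μ[g * f|mG] :=
    condExp_congr_ae (Filter.Eventually.of_forall fun ω => mul_comm _ _)
  have h2b := condExp_mul_of_stronglyMeasurable_left hgm hgf_int hf_int
  have h3 : g * μ[f|mG] =ᵐ[μ] g * μ[f|m] :=
    Filter.EventuallyEq.mul Filter.EventuallyEq.rfl
      (condexp_window_eq hmF hmG hF hG hMark hfm hf_int)
  have hmid : μ[fun ω => f ω * g ω|mG] =ᵐ[μ] g * μ[f|m] := (h2a.trans h2b).trans h3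
  have hcg_int : Integrable ((μ[f|m]) * g) μ := by
    refine (Integrable.bdd_mul (c := cg) (integrable_condExp (f := f) (m := m))
      (hgm.mono hG).aestronglyMeasurable (Filter.Eventually.of_forall hgb)).congr ?_
    exact Filter.Eventually.of_forall fun ω => mul_comm _ _
  have h5 := condExp_mul_of_stronglyMeasurable_left (μ := μ) (m := m)
    (stronglyMeasurable_condExp (f := f)) hcg_int hg_int
  calc μ[fun ω => f ω * g ω|m]
      =ᵐ[μ] μ[μ[fun ω => f ω * g ω|mG]|m] := (condExp_condExp_of_le hmG hG).symm
    _ =ᵐ[μ] μ[(μ[f|m]) * g|m] := by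
        refine condExp_congr_ae (hmid.trans ?_)
        exact Filter.Eventually.of_forall fun ω => mul_comm _ _
    _ =ᵐ[μ] μ[f|m] * μ[g|m] := h5

end MarkovAux
section Tendsto

variable {m m0 : MeasurableSpace Ω} {μ : Measure Ω}

lemma tendsto_condexp_of_monotone (hm : m ≤ m0) [IsFiniteMeasure μ]
    {f : ℕ → Ω → ℝ} {g : Ω → ℝ}
    (hf_int : ∀ n, Integrable (f n) μ) (hg_int : Integrable g μ)
    (h_mono : ∀ n ω, f n ω ≤ f (n + 1) ω)
    (h_tend : ∀ ω, Tendsto (fun n => f n ω) atTop (𝓝 (g ω))) :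
    ∀ᵐ ω ∂μ, Tendsto (fun n => (μ[f n|m]) ω) atTop (𝓝 ((μ[g|m]) ω)) := by
  haveI := sigmaFinite_trim_of_le (μ := μ) hm
  have hmono' : ∀ ω, Monotone fun n => f n ω := fun ω =>
    monotone_nat_of_le_succ fun n => h_mono n ω
  have hle : ∀ n ω, f n ω ≤ g ω := fun n ω =>
    Monotone.ge_of_tendsto (hmono' ω) (h_tend ω) n
  set e : ℕ → Ω → ℝ := fun n => μ[g - f n|m] with he_def
  have hgf_int : ∀ n, Integrable (g - f n) μ := fun n => hg_int.sub (hf_int n)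
  have he_nonneg : ∀ n, 0 ≤ᵐ[μ] e n := fun n =>
    condExp_nonneg (Filter.Eventually.of_forall fun ω => by
      simp only [Pi.sub_apply, Pi.zero_apply, sub_nonneg]; exact hle n ω)
  have he_anti : ∀ n, e (n + 1) ≤ᵐ[μ] e n := fun n =>
    condExp_mono (hgf_int (n + 1)) (hgf_int n)
      (Filter.Eventually.of_forall fun ω => by
        simp only [Pi.sub_apply]; exact sub_le_sub_left (h_mono n ω) _)
  have he_meas : ∀ n, Measurable (e n) :=
    fun n => (stronglyMeasurable_condExp.mono hm).measurable
  have he_int : ∀ n, Integrable (e n) μ := fun n => integrable_condExp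
  have hIe : Tendsto (fun n => ∫ ω, e n ω ∂μ) atTop (𝓝 0) := by
    have h1 : ∀ n, ∫ ω, e n ω ∂μ = ∫ ω, g ω ∂μ - ∫ ω, f n ω ∂μ := by
      intro n
      rw [he_def]
      rw [integral_condExp hm]
      exact integral_sub hg_int (hf_int n)
    have h2 : Tendsto (fun n => ∫ ω, f n ω ∂μ) atTop (𝓝 (∫ ω, g ω ∂μ)) :=
      integral_tendsto_of_tendsto_of_monotone hf_int hg_int
        (Filter.Eventually.of_forall hmono') (Filter.Eventually.of_forall h_tend)
    simp only [h1]
    have := (tendsto_const_nhds (x := ∫ ω, g ω ∂μ) (f := atTop (α := ℕ))).sub h2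
    simpa using this
  -- the bad sets
  have hA : ∀ k : ℕ, μ (⋂ n, {ω | 1 / ((k : ℝ) + 1) ≤ e n ω}) = 0 := by
    intro k
    set c : ℝ := 1 / ((k : ℝ) + 1) with hc_def
    have hc_pos : 0 < c := by positivity
    set A := ⋂ n, {ω | c ≤ e n ω} with hA_def
    have hA_meas : MeasurableSet A :=
      MeasurableSet.iInter fun n => measurableSet_le measurable_const (he_meas n)
    have hbound : ∀ n, c * (μ A).toReal ≤ ∫ ω, e n ω ∂μ := by
      intro n
      have h1 : μ A ≤ μ {ω | c ≤ e n ω} := measure_mono (Set.iInter_subset _ n)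
      have h2 : c * (μ {ω | c ≤ e n ω}).toReal ≤ ∫ ω, e n ω ∂μ :=
        mul_meas_ge_le_integral_of_nonneg (he_nonneg n) (he_int n) c
      refine le_trans ?_ h2
      have := ENNReal.toReal_mono (measure_ne_top μ _) h1
      nlinarith
    have h3 : c * (μ A).toReal ≤ 0 := ge_of_tendsto hIe
      (Filter.Eventually.of_forall hbound)
    have h4 : (μ A).toReal = 0 := le_antisymm (by nlinarith) ENNReal.toReal_nonneg
    exact (ENNReal.toReal_eq_zero_iff _).mp h4 |>.resolve_right (measure_ne_top μ _)
  have h_e_tend : ∀ᵐ ω ∂μ, Tendsto (fun n => e n ω) atTop (𝓝 0) := by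
    have h_nonneg_all : ∀ᵐ ω ∂μ, ∀ n, 0 ≤ e n ω := ae_all_iff.2 he_nonneg
    have h_anti_all : ∀ᵐ ω ∂μ, ∀ n, e (n + 1) ω ≤ e n ω := ae_all_iff.2 he_anti
    have h_small : ∀ᵐ ω ∂μ, ∀ k : ℕ, ∃ n, e n ω < 1 / ((k : ℝ) + 1) := by
      rw [ae_all_iff]
      intro k
      refine ae_iff.2 ?_
      have hset : {a | ¬∃ n, e n a < 1 / ((k : ℝ) + 1)} =
          ⋂ n, {ω | 1 / ((k : ℝ) + 1) ≤ e n ω} := by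
        ext ω; simp [not_exists, not_lt, Set.mem_iInter]
      rw [hset]
      exact hA k
    filter_upwards [h_nonneg_all, h_anti_all, h_small] with ω h0 h1 h2
    have hanti : Antitone fun n => e n ω := antitone_nat_of_succ_le fun n => h1 n
    rw [Metric.tendsto_atTop]
    intro ε hε
    obtain ⟨k, hk⟩ := exists_nat_one_div_lt hε
    obtain ⟨n, hn⟩ := h2 k
    refine ⟨n, fun j hj => ?_⟩
    have : e j ω ≤ e n ω := hanti hj
    rw [Real.dist_eq, sub_zero, abs_of_nonneg (h0 j)]
    calc e j ω ≤ e n ω := this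
      _ < 1 / ((k : ℝ) + 1) := hn
      _ < ε := hk
  have h_sub : ∀ᵐ ω ∂μ, ∀ n, e n ω = (μ[g|m]) ω - (μ[f n|m]) ω := by
    rw [ae_all_iff]
    intro n
    filter_upwards [condExp_sub (μ := μ) (m := m) hg_int (hf_int n)] with ω hω
    rw [he_def]
    simp only [hω, Pi.sub_apply]
  filter_upwards [h_e_tend, h_sub] with ω hω1 hω2
  have : Tendsto (fun n => (μ[g|m]) ω - e n ω) atTop (𝓝 ((μ[g|m]) ω - 0)) :=
    tendsto_const_nhds.sub hω1
  rw [sub_zero] at this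
  refine this.congr fun n => ?_
  rw [hω2 n]
  ring

end Tendsto

/-- if `dP/dR = α_t β_t` with `α_t` past-measurable and `β_t` future-measurable,
then `P` satisfies the Markov splitting at time `t`. -/
theorem factorized_density_implies_markov_splitting
    [MeasurableSpace Ω] [MeasurableSpace 𝒳]
    (X : ℝ → Ω → 𝒳) (hX : ∀ t, Measurable (X t))
    (R P : Measure Ω) [IsProbabilityMeasure R] [IsProbabilityMeasure P]
    (hR : IsMarkov X R)
    (t : ℝ) (ht : t ∈ Set.Icc (0:ℝ) 1)
    (α β : Ω → ℝ) (hα0 : ∀ ω, 0 ≤ α ω) (hβ0 : ∀ ω, 0 ≤ β ω)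
    (hα : Measurable[window X 0 t] α) (hβ : Measurable[window X t 1] β)
    (hP : P = R.withDensity (fun ω => ENNReal.ofReal (α ω * β ω))) :
    ∀ A B : Set Ω,
      MeasurableSet[window X 0 t] A → MeasurableSet[window X t 1] B →
      P[ind (A ∩ B) | at1 X t] =ᵐ[P] P[ind A | at1 X t] * P[ind B | at1 X t] := by
  intro A B hA hB
  -- σ-algebra comparisons
  have hFle : window X 0 t ≤ ‹MeasurableSpace Ω› :=
    iSup₂_le fun r _ => measurable_iff_comap_le.mp (hX r)
  have hGle : window X t 1 ≤ ‹MeasurableSpace Ω› :=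
    iSup₂_le fun r _ => measurable_iff_comap_le.mp (hX r)
  have hmF : at1 X t ≤ window X 0 t :=
    le_iSup₂ (f := fun (r : ℝ) (_ : r ∈ Set.Icc (0:ℝ) t) =>
      MeasurableSpace.comap (X r) inferInstance) t ⟨ht.1, le_refl t⟩
  have hmG : at1 X t ≤ window X t 1 :=
    le_iSup₂ (f := fun (r : ℝ) (_ : r ∈ Set.Icc t (1:ℝ)) =>
      MeasurableSpace.comap (X r) inferInstance) t ⟨le_refl t, ht.2⟩
  have hm0 : at1 X t ≤ ‹MeasurableSpace Ω› := hmF.trans hFle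
  haveI := sigmaFinite_trim_of_le (μ := P) hm0
  haveI := sigmaFinite_trim_of_le (μ := R) hm0
  have hMark : ∀ A B : Set Ω, MeasurableSet[window X 0 t] A →
      MeasurableSet[window X t 1] B →
      R[ind (A ∩ B)|at1 X t] =ᵐ[R] R[ind A|at1 X t] * R[ind B|at1 X t] :=
    fun A B hA hB => hR t ht A B hA hB
  -- measurability
  have hαm : Measurable α := hα.mono hFle le_rfl
  have hβm : Measurable β := hβ.mono hGle le_rfl
  have hαβm : Measurable fun ω => α ω * β ω := hαm.mul hβm
  have hABm : MeasurableSet A := hFle _ hA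
  have hBBm : MeasurableSet B := hGle _ hB
  -- integrability of αβ under R
  have hαβ_int : Integrable (fun ω => α ω * β ω) R := by
    have h1 : P Set.univ = 1 := measure_univ
    rw [hP, withDensity_apply _ MeasurableSet.univ, setLIntegral_univ] at h1
    refine ⟨hαβm.aestronglyMeasurable, ?_⟩
    rw [hasFiniteIntegral_iff_ofReal
      (Filter.Eventually.of_forall fun ω => mul_nonneg (hα0 ω) (hβ0 ω)), h1]
    exact ENNReal.one_lt_top
  -- conversion between P- and R-integrals
  have hconv : ∀ (φ : Ω → ℝ) (S : Set Ω), MeasurableSet S →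
      ∫ ω in S, φ ω ∂P = ∫ ω in S, (α ω * β ω) * φ ω ∂ R := by
    intro φ S hS
    have hρ' : Measurable fun ω => (α ω * β ω).toNNReal := hαβm.real_toNNReal
    have hPd : P = R.withDensity fun ω => ((α ω * β ω).toNNReal : ℝ≥0∞) := hP
    rw [hPd, setIntegral_withDensity_eq_setIntegral_smul hρ' φ hS]
    refine integral_congr_ae (Filter.Eventually.of_forall fun ω => ?_)
    show (α ω * β ω).toNNReal • φ ω = (α ω * β ω) * φ ω
    rw [NNReal.smul_def, smul_eq_mul, Real.coe_toNNReal _ (mul_nonneg (hα0 ω) (hβ0 ω))]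
  -- bounded times αβ is R-integrable
  have hint_ind_mul : ∀ (ψ : Ω → ℝ), Measurable ψ → (∀ ω, ‖ψ ω‖ ≤ 1) →
      Integrable (fun ω => ψ ω * (α ω * β ω)) R := fun ψ hψ hb =>
    Integrable.bdd_mul (c := 1) hαβ_int hψ.aestronglyMeasurable
      (Filter.Eventually.of_forall hb)
  -- truncated conditional expectations under P
  set F := P[ind A|at1 X t] with hF_def
  set G := P[ind B|at1 X t] with hG_def
  set F1 : Ω → ℝ := fun ω => max 0 (min (F ω) 1) with hF1_def
  set G1 : Ω → ℝ := fun ω => max 0 (min (G ω) 1) with hG1_def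
  have hFmeas : Measurable[at1 X t] F := stronglyMeasurable_condExp.measurable
  have hGmeas : Measurable[at1 X t] G := stronglyMeasurable_condExp.measurable
  have hF1m : StronglyMeasurable[at1 X t] F1 :=
    (measurable_const.max (hFmeas.min measurable_const)).stronglyMeasurable
  have hG1m : StronglyMeasurable[at1 X t] G1 :=
    (measurable_const.max (hGmeas.min measurable_const)).stronglyMeasurable
  have hF1_mem : ∀ ω, 0 ≤ F1 ω ∧ F1 ω ≤ 1 := fun ω =>
    ⟨le_max_left _ _, max_le (by norm_num) (min_le_right _ _)⟩
  have hG1_mem : ∀ ω, 0 ≤ G1 ω ∧ G1 ω ≤ 1 := fun ω =>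
    ⟨le_max_left _ _, max_le (by norm_num) (min_le_right _ _)⟩
  have hF1F : F1 =ᵐ[P] F := by
    filter_upwards [condexp_ind_mem (μ := P) hm0 hABm] with ω hω
    show max 0 (min (F ω) 1) = F ω
    rw [min_eq_left hω.2, max_eq_right hω.1]
  have hG1G : G1 =ᵐ[P] G := by
    filter_upwards [condexp_ind_mem (μ := P) hm0 hBBm] with ω hω
    show max 0 (min (G ω) 1) = G ω
    rw [min_eq_left hω.2, max_eq_right hω.1]
  -- R-side conditional expectations
  set h : Ω → ℝ := R[fun ω => α ω * β ω|at1 X t] with hh_def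
  set p : Ω → ℝ := R[fun ω => ind A ω * (α ω * β ω)|at1 X t] with hp_def
  set q : Ω → ℝ := R[fun ω => ind B ω * (α ω * β ω)|at1 X t] with hq_def
  set r : Ω → ℝ := R[fun ω => (ind A ω * ind B ω) * (α ω * β ω)|at1 X t] with hr_def
  have hint_p : Integrable (fun ω => ind A ω * (α ω * β ω)) R :=
    hint_ind_mul _ (stronglyMeasurable_ind hABm).measurable fun ω => norm_ind_le_one ω
  have hint_q : Integrable (fun ω => ind B ω * (α ω * β ω)) R :=
    hint_ind_mul _ (stronglyMeasurable_ind hBBm).measurable fun ω => norm_ind_le_one ω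
  have hint_r : Integrable (fun ω => (ind A ω * ind B ω) * (α ω * β ω)) R :=
    hint_ind_mul _ ((stronglyMeasurable_ind hABm).measurable.mul
      (stronglyMeasurable_ind hBBm).measurable) fun ω =>
        norm_le_of_nonneg_of_le (mul_nonneg (ind_nonneg ω) (ind_nonneg ω))
          (mul_le_one₀ (ind_le_one ω) (ind_nonneg ω) (ind_le_one ω))
  -- the key change-of-measure identity for conditional expectations
  have key_c : ∀ (C : Set Ω) (C1 : Ω → ℝ), MeasurableSet C →
      StronglyMeasurable[at1 X t] C1 → (∀ ω, 0 ≤ C1 ω) → (∀ ω, C1 ω ≤ 1) →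
      C1 =ᵐ[P] P[ind C|at1 X t] →
      (fun ω => C1 ω * h ω) =ᵐ[R] R[fun ω => ind C ω * (α ω * β ω)|at1 X t] := by
    intro C C1 hCm hC1m hC10 hC11 hC1e
    have hC1b : ∀ ω, ‖C1 ω‖ ≤ 1 := fun ω => norm_le_of_nonneg_of_le (hC10 ω) (hC11 ω)
    refine ae_eq_condExp_of_forall_setIntegral_eq hm0
      (hint_ind_mul _ (stronglyMeasurable_ind hCm).measurable fun ω => norm_ind_le_one ω)
      (fun s _ _ => (Integrable.bdd_mul (c := 1)
        (integrable_condExp (m := at1 X t) (f := fun ω => α ω * β ω))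
        (hC1m.mono hm0).aestronglyMeasurable
        (Filter.Eventually.of_forall hC1b)).integrableOn)
      (fun S hS _ => ?_) (hC1m.mul stronglyMeasurable_condExp).aestronglyMeasurable
    have hSm : MeasurableSet S := hm0 _ hS
    have hψm : StronglyMeasurable[at1 X t] (fun ω => ind S ω * C1 ω) :=
      (stronglyMeasurable_ind hS).mul hC1m
    have hψb : ∀ ω, ‖ind S ω * C1 ω‖ ≤ 1 :=
      fun ω => norm_le_of_nonneg_of_le (mul_nonneg (ind_nonneg ω) (hC10 ω))
        (mul_le_one₀ (ind_le_one ω) (hC10 ω) (hC11 ω))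
    have hψint : Integrable (fun ω => (ind S ω * C1 ω) * (α ω * β ω)) R :=
      hint_ind_mul _ ((hψm.mono hm0).measurable) hψb
    calc ∫ ω in S, C1 ω * h ω ∂ R
        = ∫ ω, ind S ω * (C1 ω * h ω) ∂ R := setIntegral_eq_integral_ind hSm _
      _ = ∫ ω, (ind S ω * C1 ω) * h ω ∂ R := by congr 1; funext ω; ring
      _ = ∫ ω, (ind S ω * C1 ω) * (α ω * β ω) ∂ R :=
          (integral_stronglyMeasurable_mul_condexp hm0 hψm hαβ_int hψint).symm
      _ = ∫ ω, ind S ω * ((α ω * β ω) * C1 ω) ∂ R := by congr 1; funext ω; ring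
      _ = ∫ ω in S, (α ω * β ω) * C1 ω ∂ R := (setIntegral_eq_integral_ind hSm _).symm
      _ = ∫ ω in S, C1 ω ∂P := (hconv C1 S hSm).symm
      _ = ∫ ω in S, (P[ind C|at1 X t]) ω ∂P :=
          integral_congr_ae (ae_restrict_of_ae hC1e)
      _ = ∫ ω in S, ind C ω ∂P := setIntegral_condExp hm0 (integrable_ind hCm) hS
      _ = ∫ ω in S, (α ω * β ω) * ind C ω ∂ R := hconv (ind C) S hSm
      _ = ∫ ω in S, ind C ω * (α ω * β ω) ∂ R := by congr 1; funext ω; ring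
  have hF1h : (fun ω => F1 ω * h ω) =ᵐ[R] p :=
    key_c A F1 hABm hF1m (fun ω => (hF1_mem ω).1) (fun ω => (hF1_mem ω).2) hF1F
  have hG1h : (fun ω => G1 ω * h ω) =ᵐ[R] q :=
    key_c B G1 hBBm hG1m (fun ω => (hG1_mem ω).1) (fun ω => (hG1_mem ω).2) hG1G
  -- positivity / domination facts
  have hh0 : 0 ≤ᵐ[R] h :=
    condExp_nonneg (Filter.Eventually.of_forall fun ω => mul_nonneg (hα0 ω) (hβ0 ω))
  have hr0 : 0 ≤ᵐ[R] r :=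
    condExp_nonneg (Filter.Eventually.of_forall fun ω =>
      mul_nonneg (mul_nonneg (ind_nonneg ω) (ind_nonneg ω)) (mul_nonneg (hα0 ω) (hβ0 ω)))
  have hr_le_h : r ≤ᵐ[R] h := by
    refine condExp_mono hint_r hαβ_int (Filter.Eventually.of_forall fun ω => ?_)
    exact mul_le_of_le_one_left (mul_nonneg (hα0 ω) (hβ0 ω))
      (mul_le_one₀ (ind_le_one ω) (ind_nonneg ω) (ind_le_one ω))
  -- the factorization identity (★)
  have hstar : ∀ᵐ ω ∂ R, r ω * h ω = p ω * q ω := by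
    have monmin : ∀ (x : ℝ) (n : ℕ), min x (n : ℝ) ≤ min x ((n + 1 : ℕ) : ℝ) :=
      fun x n => min_le_min le_rfl (by exact_mod_cast Nat.le_succ n)
    have tmin : ∀ (x : ℝ), 0 ≤ x → Tendsto (fun n : ℕ => min x (n : ℝ)) atTop (𝓝 x) := by
      intro x _
      refine tendsto_atTop_of_eventually_const (i₀ := ⌈x⌉₊) fun n hn => ?_
      exact min_eq_left ((Nat.le_ceil x).trans (Nat.cast_le.2 hn))
    set fa : ℕ → Ω → ℝ := fun n ω => ind A ω * min (α ω) (n : ℝ) with hfa_def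
    set fb : ℕ → Ω → ℝ := fun n ω => ind B ω * min (β ω) (n : ℝ) with hfb_def
    set sa : ℕ → Ω → ℝ := fun n ω => min (α ω) (n : ℝ) with hsa_def
    set sb : ℕ → Ω → ℝ := fun n ω => min (β ω) (n : ℝ) with hsb_def
    have hmem_a : ∀ (n : ℕ) ω, 0 ≤ sa n ω ∧ sa n ω ≤ (n : ℝ) :=
      fun n ω => ⟨le_min (hα0 ω) (Nat.cast_nonneg n), min_le_right _ _⟩
    have hmem_b : ∀ (n : ℕ) ω, 0 ≤ sb n ω ∧ sb n ω ≤ (n : ℝ) :=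
      fun n ω => ⟨le_min (hβ0 ω) (Nat.cast_nonneg n), min_le_right _ _⟩
    have hsam : ∀ n : ℕ, StronglyMeasurable[window X 0 t] (sa n) :=
      fun n => (hα.min measurable_const).stronglyMeasurable
    have hsbm : ∀ n : ℕ, StronglyMeasurable[window X t 1] (sb n) :=
      fun n => (hβ.min measurable_const).stronglyMeasurable
    have hfam : ∀ n : ℕ, StronglyMeasurable[window X 0 t] (fa n) :=
      fun n => (stronglyMeasurable_ind hA).mul (hsam n)
    have hfbm : ∀ n : ℕ, StronglyMeasurable[window X t 1] (fb n) :=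
      fun n => (stronglyMeasurable_ind hB).mul (hsbm n)
    have hbsa : ∀ (n : ℕ) ω, ‖sa n ω‖ ≤ (n : ℝ) :=
      fun n ω => norm_le_of_nonneg_of_le (hmem_a n ω).1 (hmem_a n ω).2
    have hbsb : ∀ (n : ℕ) ω, ‖sb n ω‖ ≤ (n : ℝ) :=
      fun n ω => norm_le_of_nonneg_of_le (hmem_b n ω).1 (hmem_b n ω).2
    have hmem_fa : ∀ (n : ℕ) ω, 0 ≤ fa n ω ∧ fa n ω ≤ (n : ℝ) := fun n ω =>
      ⟨mul_nonneg (ind_nonneg ω) (hmem_a n ω).1,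
        le_trans (mul_le_of_le_one_left (hmem_a n ω).1 (ind_le_one ω)) (hmem_a n ω).2⟩
    have hmem_fb : ∀ (n : ℕ) ω, 0 ≤ fb n ω ∧ fb n ω ≤ (n : ℝ) := fun n ω =>
      ⟨mul_nonneg (ind_nonneg ω) (hmem_b n ω).1,
        le_trans (mul_le_of_le_one_left (hmem_b n ω).1 (ind_le_one ω)) (hmem_b n ω).2⟩
    have hbfa : ∀ (n : ℕ) ω, ‖fa n ω‖ ≤ (n : ℝ) :=
      fun n ω => norm_le_of_nonneg_of_le (hmem_fa n ω).1 (hmem_fa n ω).2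
    have hbfb : ∀ (n : ℕ) ω, ‖fb n ω‖ ≤ (n : ℝ) :=
      fun n ω => norm_le_of_nonneg_of_le (hmem_fb n ω).1 (hmem_fb n ω).2
    -- the four factorization identities at level n
    have e1 : ∀ n : ℕ, R[fun ω => fa n ω * fb n ω|at1 X t] =ᵐ[R]
        R[fa n|at1 X t] * R[fb n|at1 X t] := fun n =>
      condexp_mul_of_meas hmF hmG hFle hGle hMark (hfam n) (hfbm n) (hbfa n) (hbfb n)
    have e2 : ∀ n : ℕ, R[fun ω => sa n ω * sb n ω|at1 X t] =ᵐ[R]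
        R[sa n|at1 X t] * R[sb n|at1 X t] := fun n =>
      condexp_mul_of_meas hmF hmG hFle hGle hMark (hsam n) (hsbm n) (hbsa n) (hbsb n)
    have e3 : ∀ n : ℕ, R[fun ω => fa n ω * sb n ω|at1 X t] =ᵐ[R]
        R[fa n|at1 X t] * R[sb n|at1 X t] := fun n =>
      condexp_mul_of_meas hmF hmG hFle hGle hMark (hfam n) (hsbm n) (hbfa n) (hbsb n)
    have e4 : ∀ n : ℕ, R[fun ω => sa n ω * fb n ω|at1 X t] =ᵐ[R]
        R[sa n|at1 X t] * R[fb n|at1 X t] := fun n =>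
      condexp_mul_of_meas hmF hmG hFle hGle hMark (hsam n) (hfbm n) (hbsa n) (hbfb n)
    -- ambient measurability and integrability of the truncated products
    have hfa_meas : ∀ n : ℕ, Measurable (fa n) := fun n => ((hfam n).mono hFle).measurable
    have hfb_meas : ∀ n : ℕ, Measurable (fb n) := fun n => ((hfbm n).mono hGle).measurable
    have hsa_meas : ∀ n : ℕ, Measurable (sa n) := fun n => ((hsam n).mono hFle).measurable
    have hsb_meas : ∀ n : ℕ, Measurable (sb n) := fun n => ((hsbm n).mono hGle).measurable
    have hprod_int : ∀ (u v : ℕ → Ω → ℝ), (∀ n, Measurable (u n)) →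
        (∀ n, Measurable (v n)) → (∀ n ω, ‖u n ω‖ ≤ (n : ℝ)) →
        (∀ n ω, ‖v n ω‖ ≤ (n : ℝ)) → ∀ n : ℕ,
        Integrable (fun ω => u n ω * v n ω) R := by
      intro u v hu hv hbu hbv n
      refine integrable_of_bounded ((hu n).mul (hv n)).aestronglyMeasurable
        ((n : ℝ) * n) fun ω => ?_
      exact (norm_mul_le _ _).trans
        (mul_le_mul (hbu n ω) (hbv n ω) (norm_nonneg _) (Nat.cast_nonneg n))
    -- monotonicity of the truncated products
    have hmono_gen : ∀ (u v : ℕ → Ω → ℝ), (∀ n ω, 0 ≤ u n ω) → (∀ n ω, 0 ≤ v n ω) →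
        (∀ n ω, u n ω ≤ u (n + 1) ω) → (∀ n ω, v n ω ≤ v (n + 1) ω) →
        ∀ (n : ℕ) ω, u n ω * v n ω ≤ u (n + 1) ω * v (n + 1) ω := by
      intro u v hu0 hv0 hustep hvstep n ω
      exact mul_le_mul (hustep n ω) (hvstep n ω) (hv0 n ω)
        (le_trans (hu0 n ω) (hustep n ω))
    have hstep_sa : ∀ (n : ℕ) ω, sa n ω ≤ sa (n + 1) ω := fun n ω => monmin (α ω) n
    have hstep_sb : ∀ (n : ℕ) ω, sb n ω ≤ sb (n + 1) ω := fun n ω => monmin (β ω) n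
    have hstep_fa : ∀ (n : ℕ) ω, fa n ω ≤ fa (n + 1) ω := fun n ω =>
      mul_le_mul_of_nonneg_left (monmin (α ω) n) (ind_nonneg ω)
    have hstep_fb : ∀ (n : ℕ) ω, fb n ω ≤ fb (n + 1) ω := fun n ω =>
      mul_le_mul_of_nonneg_left (monmin (β ω) n) (ind_nonneg ω)
    -- pointwise limits
    have htend_sa : ∀ ω, Tendsto (fun n => sa n ω) atTop (𝓝 (α ω)) :=
      fun ω => tmin (α ω) (hα0 ω)
    have htend_sb : ∀ ω, Tendsto (fun n => sb n ω) atTop (𝓝 (β ω)) :=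
      fun ω => tmin (β ω) (hβ0 ω)
    have htend_fa : ∀ ω, Tendsto (fun n => fa n ω) atTop (𝓝 (ind A ω * α ω)) :=
      fun ω => tendsto_const_nhds.mul (htend_sa ω)
    have htend_fb : ∀ ω, Tendsto (fun n => fb n ω) atTop (𝓝 (ind B ω * β ω)) :=
      fun ω => tendsto_const_nhds.mul (htend_sb ω)
    -- the four conditional monotone convergences
    have c1 : ∀ᵐ ω ∂ R, Tendsto (fun n => (R[fun ω => fa n ω * fb n ω|at1 X t]) ω)
        atTop (𝓝 (r ω)) := by
      rw [hr_def]
      refine tendsto_condexp_of_monotone hm0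
        (hprod_int fa fb hfa_meas hfb_meas hbfa hbfb) hint_r
        (hmono_gen fa fb (fun n ω => (hmem_fa n ω).1) (fun n ω => (hmem_fb n ω).1)
          hstep_fa hstep_fb) (fun ω => ?_)
      have := (htend_fa ω).mul (htend_fb ω)
      rw [show (ind A ω * ind B ω) * (α ω * β ω) =
        (ind A ω * α ω) * (ind B ω * β ω) from by ring]
      exact this
    have c2 : ∀ᵐ ω ∂ R, Tendsto (fun n => (R[fun ω => sa n ω * sb n ω|at1 X t]) ω)
        atTop (𝓝 (h ω)) := by
      rw [hh_def]
      exact tendsto_condexp_of_monotone hm0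
        (hprod_int sa sb hsa_meas hsb_meas hbsa hbsb) hαβ_int
        (hmono_gen sa sb (fun n ω => (hmem_a n ω).1) (fun n ω => (hmem_b n ω).1)
          hstep_sa hstep_sb) (fun ω => (htend_sa ω).mul (htend_sb ω))
    have c3 : ∀ᵐ ω ∂ R, Tendsto (fun n => (R[fun ω => fa n ω * sb n ω|at1 X t]) ω)
        atTop (𝓝 (p ω)) := by
      rw [hp_def]
      refine tendsto_condexp_of_monotone hm0
        (hprod_int fa sb hfa_meas hsb_meas hbfa hbsb) hint_p
        (hmono_gen fa sb (fun n ω => (hmem_fa n ω).1) (fun n ω => (hmem_b n ω).1)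
          hstep_fa hstep_sb) (fun ω => ?_)
      have := (htend_fa ω).mul (htend_sb ω)
      rw [show ind A ω * (α ω * β ω) = (ind A ω * α ω) * β ω from by ring]
      exact this
    have c4 : ∀ᵐ ω ∂ R, Tendsto (fun n => (R[fun ω => sa n ω * fb n ω|at1 X t]) ω)
        atTop (𝓝 (q ω)) := by
      rw [hq_def]
      refine tendsto_condexp_of_monotone hm0
        (hprod_int sa fb hsa_meas hfb_meas hbsa hbfb) ?_ 
        (hmono_gen sa fb (fun n ω => (hmem_a n ω).1) (fun n ω => (hmem_fb n ω).1)
          hstep_sa hstep_fb) (fun ω => ?_)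
      · refine hint_q.congr (Filter.Eventually.of_forall fun ω => ?_)
        ring
      · have := (htend_sa ω).mul (htend_fb ω)
        rw [show α ω * (ind B ω * β ω) = ind B ω * (α ω * β ω) from by ring] at this
        exact this
    -- combine
    have i1 : ∀ᵐ ω ∂ R, ∀ n : ℕ, (R[fun ω => fa n ω * fb n ω|at1 X t]) ω =
        (R[fa n|at1 X t]) ω * (R[fb n|at1 X t]) ω := ae_all_iff.2 fun n => e1 n
    have i2 : ∀ᵐ ω ∂ R, ∀ n : ℕ, (R[fun ω => sa n ω * sb n ω|at1 X t]) ω =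
        (R[sa n|at1 X t]) ω * (R[sb n|at1 X t]) ω := ae_all_iff.2 fun n => e2 n
    have i3 : ∀ᵐ ω ∂ R, ∀ n : ℕ, (R[fun ω => fa n ω * sb n ω|at1 X t]) ω =
        (R[fa n|at1 X t]) ω * (R[sb n|at1 X t]) ω := ae_all_iff.2 fun n => e3 n
    have i4 : ∀ᵐ ω ∂ R, ∀ n : ℕ, (R[fun ω => sa n ω * fb n ω|at1 X t]) ω =
        (R[sa n|at1 X t]) ω * (R[fb n|at1 X t]) ω := ae_all_iff.2 fun n => e4 n
    filter_upwards [c1, c2, c3, c4, i1, i2, i3, i4] with ω t1 t2 t3 t4 j1 j2 j3 j4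
    refine tendsto_nhds_unique (t1.mul t2) ?_
    refine Filter.Tendsto.congr (fun n => ?_) (t3.mul t4)
    rw [j1 n, j2 n, j3 n, j4 n]
    ring
  -- conclude F1 * G1 * h = r a.e. R
  have hFGh_r : (fun ω => F1 ω * G1 ω * h ω) =ᵐ[R] r := by
    filter_upwards [hstar, hF1h, hG1h, hh0, hr0, hr_le_h] with ω hs hpω hqω h0 r0 rh
    by_cases hz : h ω = 0
    · rw [hz, mul_zero]
      have : r ω ≤ 0 := by rw [← hz]; exact rh
      exact (le_antisymm this r0).symm
    · refine mul_right_cancel₀ hz ?_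
      calc (F1 ω * G1 ω * h ω) * h ω = (F1 ω * h ω) * (G1 ω * h ω) := by ring
        _ = p ω * q ω := by rw [hpω, hqω]
        _ = r ω * h ω := hs.symm
  -- final identification under P
  have hAB_meas : MeasurableSet (A ∩ B) := hABm.inter hBBm
  have hfinal : (fun ω => F1 ω * G1 ω) =ᵐ[P] P[ind (A ∩ B)|at1 X t] := by
    refine ae_eq_condExp_of_forall_setIntegral_eq hm0 (integrable_ind hAB_meas)
      (fun s _ _ => (integrable_of_bounded (μ := P)
        ((hF1m.mul hG1m).mono hm0).aestronglyMeasurable 1 (fun ω =>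
          norm_le_of_nonneg_of_le (mul_nonneg (hF1_mem ω).1 (hG1_mem ω).1)
            (mul_le_one₀ (hF1_mem ω).2 (hG1_mem ω).1 (hG1_mem ω).2))).integrableOn)
      (fun S hS _ => ?_) (hF1m.mul hG1m).aestronglyMeasurable
    have hSm : MeasurableSet S := hm0 _ hS
    have hψm : StronglyMeasurable[at1 X t] (fun ω => ind S ω * F1 ω * G1 ω) :=
      ((stronglyMeasurable_ind hS).mul hF1m).mul hG1m
    have hψb : ∀ ω, ‖ind S ω * F1 ω * G1 ω‖ ≤ 1 := fun ω =>
      norm_le_of_nonneg_of_le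
        (mul_nonneg (mul_nonneg (ind_nonneg ω) (hF1_mem ω).1) (hG1_mem ω).1)
        (mul_le_one₀ (mul_le_one₀ (ind_le_one ω) (hF1_mem ω).1 (hF1_mem ω).2)
          (hG1_mem ω).1 (hG1_mem ω).2)
    have hψint : Integrable (fun ω => (ind S ω * F1 ω * G1 ω) * (α ω * β ω)) R :=
      hint_ind_mul _ ((hψm.mono hm0).measurable) hψb
    calc ∫ ω in S, F1 ω * G1 ω ∂P
        = ∫ ω in S, (α ω * β ω) * (F1 ω * G1 ω) ∂ R := hconv _ S hSm
      _ = ∫ ω, ind S ω * ((α ω * β ω) * (F1 ω * G1 ω)) ∂ R :=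
          setIntegral_eq_integral_ind hSm _
      _ = ∫ ω, (ind S ω * F1 ω * G1 ω) * (α ω * β ω) ∂ R := by congr 1; funext ω; ring
      _ = ∫ ω, (ind S ω * F1 ω * G1 ω) * h ω ∂ R :=
          integral_stronglyMeasurable_mul_condexp hm0 hψm hαβ_int hψint
      _ = ∫ ω, ind S ω * (F1 ω * G1 ω * h ω) ∂ R := by congr 1; funext ω; ring
      _ = ∫ ω, ind S ω * r ω ∂ R := by
          refine integral_congr_ae ?_
          filter_upwards [hFGh_r] with ω hω
          rw [hω]
      _ = ∫ ω in S, r ω ∂ R := (setIntegral_eq_integral_ind hSm _).symm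
      _ = ∫ ω in S, (ind A ω * ind B ω) * (α ω * β ω) ∂ R :=
          setIntegral_condExp hm0 hint_r hS
      _ = ∫ ω in S, (α ω * β ω) * ind (A ∩ B) ω ∂ R := by
          congr 1; funext ω; rw [ind_inter]; ring
      _ = ∫ ω in S, ind (A ∩ B) ω ∂P := (hconv _ S hSm).symm
  refine hfinal.symm.trans ?_
  filter_upwards [hF1F, hG1G] with ω h1 h2
  show F1 ω * G1 ω = (F * G) ω
  rw [Pi.mul_apply, h1, h2]

end
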